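/- Let M be a kernel on a finite set S such that x^{3/2} M_{α,β}(x) → L_{α,β} ∈ [0,∞) as x → ∞ for all α,β (along the appropriate congruence class). Then for every k ≥ 1, x^{3/2}[M^{*k}]_{α,β}(x) → Σ_{i=0}^{k−1} [B^i · L · B^{(k−1)−i}]_{α,β} as x → ∞, where B_{α,β} = Σ_x M_{α,β}(x). -/

import Mathlib

open Filter Matrix

/-- Convolution of two matrix-valued kernels on `ℕ`. -/
noncomputable def kconv {S : Type*} [Fintype S]
    (F G : ℕ → Matrix S S ℝ) : ℕ → Matrix S S ℝ :=
  fun x => ∑ y ∈ Finset.range (x + 1), F y * G (x - y)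

/-- `n`-fold convolution power of a kernel; `kpow M 0` is the identity kernel
concentrated at `x = 0`. -/
noncomputable def kpow {S : Type*} [Fintype S] [DecidableEq S]
    (M : ℕ → Matrix S S ℝ) : ℕ → ℕ → Matrix S S ℝ
  | 0 => fun x => if x = 0 then 1 else 0
  | n + 1 => kconv M (kpow M n)

/-- If `x^{3/2} M_{α,β}(x) → L_{α,β}` as `x → ∞`, then for every `k ≥ 1`,
`x^{3/2}[M^{*k}]_{α,β}(x) → Σ_{i=0}^{k-1} [B^i L B^{k-1-i}]_{α,β}`, where `B` is the
matrix of total masses. -/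
private lemma tail_shift {g : ℕ → ℝ} {b : ℝ}
    (hb : Tendsto (fun x : ℕ => (x : ℝ) ^ ((3 : ℝ) / 2) * g x) atTop (nhds b)) (y : ℕ) :
    Tendsto (fun x : ℕ => (x : ℝ) ^ ((3 : ℝ) / 2) * g (x - y)) atTop (nhds b) := by
  have hratio : Tendsto (fun x : ℕ => (x : ℝ) / ((x - y : ℕ) : ℝ)) atTop (nhds 1) := by
    have h0 : Tendsto (fun x : ℕ => (1 : ℝ) + (y : ℝ) / ((x - y : ℕ) : ℝ)) atTop (nhds 1) := by
      have : Tendsto (fun x : ℕ => (y : ℝ) / ((x - y : ℕ) : ℝ)) atTop (nhds 0) :=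
        Tendsto.div_atTop tendsto_const_nhds
          (tendsto_natCast_atTop_atTop.comp (tendsto_sub_atTop_nat y))
      simpa using tendsto_const_nhds.add this
    refine h0.congr' ?_
    filter_upwards [eventually_ge_atTop (y + 1)] with x hx
    have h1 : ((x - y : ℕ) : ℝ) = (x : ℝ) - (y : ℝ) := by
      push_cast [Nat.cast_sub (by omega : y ≤ x)]; ring
    have h2 : (x : ℝ) - (y : ℝ) ≠ 0 := by
      have h3 : y + 1 ≤ x := hx
      have : (y:ℝ) + 1 ≤ (x:ℝ) := by exact_mod_cast h3
      linarith
    rw [h1]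
    field_simp
    ring
  have hr : Tendsto (fun x : ℕ => ((x : ℝ) / ((x - y : ℕ) : ℝ)) ^ ((3 : ℝ) / 2))
      atTop (nhds 1) := by
    have := (Real.continuousAt_rpow_const 1 ((3:ℝ)/2) (Or.inl one_ne_zero)).tendsto.comp hratio
    simpa [Real.one_rpow, Function.comp_def] using this
  have hcomp : Tendsto (fun x : ℕ => ((x - y : ℕ) : ℝ) ^ ((3 : ℝ) / 2) * g (x - y))
      atTop (nhds b) := hb.comp (tendsto_sub_atTop_nat y)
  have := hcomp.mul hr
  rw [mul_one] at this
  refine this.congr' ?_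
  filter_upwards [eventually_ge_atTop (y + 1)] with x hx
  have h2 : (0:ℝ) < ((x - y : ℕ) : ℝ) := by
    have : 1 ≤ x - y := by omega
    exact_mod_cast Nat.pos_of_ne_zero (by omega)
  have hxeq : (x : ℝ) = ((x - y : ℕ) : ℝ) * ((x : ℝ) / ((x - y : ℕ) : ℝ)) := by
    field_simp
  calc ((x - y : ℕ) : ℝ) ^ ((3 : ℝ) / 2) * g (x - y) * ((x:ℝ) / ((x - y : ℕ) : ℝ)) ^ ((3:ℝ)/2)
      = (((x - y : ℕ) : ℝ) * ((x:ℝ) / ((x - y : ℕ) : ℝ))) ^ ((3:ℝ)/2) * g (x - y) := by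
        rw [Real.mul_rpow h2.le (by positivity)]; ring
    _ = (x : ℝ) ^ ((3 : ℝ) / 2) * g (x - y) := by rw [← hxeq]

private lemma half_tail {f g : ℕ → ℝ} {b A : ℝ}
    (p : ℕ → ℕ → Prop) [∀ x y, Decidable (p x y)]
    (hp1 : ∀ y, ∀ᶠ x in atTop, p x y)
    (hp2 : ∀ x y, p x y → x ≤ 2 * (x - y))
    (hf : ∀ x, 0 ≤ f x) (hg : ∀ x, 0 ≤ g x)
    (hb : Tendsto (fun x : ℕ => (x : ℝ) ^ ((3 : ℝ) / 2) * g x) atTop (nhds b))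
    (hA : HasSum f A) :
    Tendsto (fun x : ℕ => ∑' y : ℕ,
        if p x y then f y * ((x : ℝ) ^ ((3 : ℝ) / 2) * g (x - y)) else 0)
      atTop (nhds (A * b)) := by
  obtain ⟨C, hC⟩ := hb.bddAbove_range
  have hC' : ∀ n : ℕ, (n : ℝ) ^ ((3 : ℝ) / 2) * g n ≤ max C 0 := fun n =>
    le_trans (hC (Set.mem_range_self n)) (le_max_left _ _)
  have key := tendsto_tsum_of_dominated_convergence
    (f := fun x y => if p x y then f y * ((x : ℝ) ^ ((3 : ℝ) / 2) * g (x - y)) else 0)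
    (g := fun y => f y * b)
    (bound := fun y => f y * ((2 : ℝ) ^ ((3 : ℝ) / 2) * max C 0))
    (𝓕 := atTop) (hA.summable.mul_right _)
    (fun y => by
      have hlim : Tendsto (fun x : ℕ => f y * ((x : ℝ) ^ ((3 : ℝ) / 2) * g (x - y)))
          atTop (nhds (f y * b)) := (tail_shift hb y).const_mul _
      refine hlim.congr' ?_
      filter_upwards [hp1 y] with x hx
      rw [if_pos hx])
    (by
      filter_upwards with x
      intro y
      by_cases hxy : p x y
      · rw [if_pos hxy]
        have h1 : (0:ℝ) ≤ (x : ℝ) ^ ((3 : ℝ) / 2) * g (x - y) :=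
          mul_nonneg (Real.rpow_nonneg (Nat.cast_nonneg _) _) (hg _)
        rw [Real.norm_of_nonneg (mul_nonneg (hf y) h1)]
        refine mul_le_mul_of_nonneg_left ?_ (hf y)
        have hle : (x : ℝ) ^ ((3:ℝ)/2) ≤ (2:ℝ) ^ ((3:ℝ)/2) * ((x - y : ℕ) : ℝ) ^ ((3:ℝ)/2) := by
          have hxx : (x : ℝ) ≤ (2 : ℝ) * ((x - y : ℕ) : ℝ) := by
            exact_mod_cast hp2 x y hxy
          calc (x : ℝ) ^ ((3:ℝ)/2) ≤ ((2:ℝ) * ((x - y : ℕ) : ℝ)) ^ ((3:ℝ)/2) :=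
                Real.rpow_le_rpow (by positivity) hxx (by norm_num)
            _ = (2:ℝ) ^ ((3:ℝ)/2) * ((x - y : ℕ) : ℝ) ^ ((3:ℝ)/2) :=
                Real.mul_rpow (by norm_num) (Nat.cast_nonneg _)
        calc (x : ℝ) ^ ((3:ℝ)/2) * g (x - y)
            ≤ (2:ℝ) ^ ((3:ℝ)/2) * ((x - y : ℕ) : ℝ) ^ ((3:ℝ)/2) * g (x - y) :=
              mul_le_mul_of_nonneg_right hle (hg _)
          _ = (2:ℝ) ^ ((3:ℝ)/2) * (((x - y : ℕ) : ℝ) ^ ((3:ℝ)/2) * g (x - y)) := by ring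
          _ ≤ (2:ℝ) ^ ((3:ℝ)/2) * max C 0 :=
              mul_le_mul_of_nonneg_left (hC' _) (by positivity)
      · rw [if_neg hxy]
        simp only [norm_zero]
        exact mul_nonneg (hf y) (by positivity))
  have : ∑' y : ℕ, f y * b = A * b := by
    rw [tsum_mul_right, hA.tsum_eq]
  rwa [this] at key

private lemma conv_tail {f g : ℕ → ℝ} {a b A Bg : ℝ}
    (hf : ∀ x, 0 ≤ f x) (hg : ∀ x, 0 ≤ g x)
    (ha : Tendsto (fun x : ℕ => (x : ℝ) ^ ((3 : ℝ) / 2) * f x) atTop (nhds a))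
    (hb : Tendsto (fun x : ℕ => (x : ℝ) ^ ((3 : ℝ) / 2) * g x) atTop (nhds b))
    (hA : HasSum f A) (hBg : HasSum g Bg) :
    Tendsto (fun x : ℕ => (x : ℝ) ^ ((3 : ℝ) / 2) *
        ∑ y ∈ Finset.range (x + 1), f y * g (x - y)) atTop (nhds (A * b + a * Bg)) := by
  have h1 := half_tail (f := f) (g := g) (fun x y => 2 * y ≤ x)
    (fun y => eventually_ge_atTop (2 * y)) (fun x y h => by omega) hf hg hb hA
  have h2 := half_tail (f := g) (g := f) (fun x z => 2 * z < x)
    (fun z => eventually_ge_atTop (2 * z + 1)) (fun x z h => by omega) hg hf ha hBg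
  have := h1.add h2
  rw [show A * b + Bg * a = A * b + a * Bg by ring] at this
  refine this.congr fun x => ?_
  have e1 : (∑' y : ℕ, if 2 * y ≤ x then f y * ((x : ℝ) ^ ((3 : ℝ) / 2) * g (x - y)) else 0)
      = ∑ y ∈ Finset.range (x + 1),
        (if 2 * y ≤ x then f y * ((x : ℝ) ^ ((3 : ℝ) / 2) * g (x - y)) else 0) := by
    refine tsum_eq_sum fun y hy => ?_
    rw [Finset.mem_range] at hy
    exact if_neg (by omega)
  have e2 : (∑' z : ℕ, if 2 * z < x then g z * ((x : ℝ) ^ ((3 : ℝ) / 2) * f (x - z)) else 0)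
      = ∑ z ∈ Finset.range (x + 1),
        (if 2 * z < x then g z * ((x : ℝ) ^ ((3 : ℝ) / 2) * f (x - z)) else 0) := by
    refine tsum_eq_sum fun z hz => ?_
    rw [Finset.mem_range] at hz
    exact if_neg (by omega)
  rw [e1, e2]
  have e3 : ∑ z ∈ Finset.range (x + 1),
       (if 2 * z < x then g z * ((x : ℝ) ^ ((3 : ℝ) / 2) * f (x - z)) else 0)
      = ∑ y ∈ Finset.range (x + 1),
       (if ¬ (2 * y ≤ x) then f y * ((x : ℝ) ^ ((3 : ℝ) / 2) * g (x - y)) else 0) := by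
    refine Finset.sum_nbij' (fun z => x - z) (fun y => x - y) ?_ ?_ ?_ ?_ ?_
    · intro z hz; rw [Finset.mem_range] at hz ⊢; omega
    · intro y hy; rw [Finset.mem_range] at hy ⊢; omega
    · intro z hz; rw [Finset.mem_range] at hz; omega
    · intro y hy; rw [Finset.mem_range] at hy; omega
    · intro z hz
      rw [Finset.mem_range] at hz
      by_cases h : 2 * z < x
      · rw [if_pos h, if_pos (show ¬ (2 * (x - z) ≤ x) by omega),
          show x - (x - z) = z by omega]
        ring
      · rw [if_neg h, if_neg (show ¬ ¬ (2 * (x - z) ≤ x) by omega)]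
  rw [e3, ← Finset.sum_add_distrib, Finset.mul_sum]
  refine Finset.sum_congr rfl fun y _ => ?_
  by_cases h : 2 * y ≤ x
  · rw [if_pos h, if_neg (by omega)]; ring
  · rw [if_neg h, if_pos h]; ring

private lemma kpow_one {S : Type*} [Fintype S] [DecidableEq S] (M : ℕ → Matrix S S ℝ) :
    kpow M 1 = M := by
  funext x
  show kconv M (kpow M 0) x = M x
  unfold kconv
  have h : ∑ y ∈ Finset.range (x + 1), M y * kpow M 0 (x - y)
      = M x * kpow M 0 (x - x) := by
    refine Finset.sum_eq_single_of_mem x (Finset.self_mem_range_succ x) ?_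
    intro y hy hne
    rw [Finset.mem_range] at hy
    have h0 : ¬ (x - y = 0) := by omega
    simp [kpow, h0]
  rw [h, Nat.sub_self]
  simp [kpow]

private lemma kconv_apply {S : Type*} [Fintype S]
    (F G : ℕ → Matrix S S ℝ) (x : ℕ) (α β : S) :
    kconv F G x α β = ∑ γ, ∑ y ∈ Finset.range (x + 1), F y α γ * G (x - y) γ β := by
  unfold kconv
  rw [Matrix.sum_apply]
  simp only [Matrix.mul_apply]
  exact Finset.sum_comm

theorem kernel_convolution_tail_asymptotics
    {S : Type*} [Fintype S] [DecidableEq S]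
    (M : ℕ → Matrix S S ℝ) (L B : Matrix S S ℝ)
    (hM : ∀ x α β, 0 ≤ M x α β)
    (hL : ∀ α β, 0 ≤ L α β)
    (htail : ∀ α β, Filter.Tendsto (fun x : ℕ => (x : ℝ) ^ ((3 : ℝ) / 2) * M x α β)
      Filter.atTop (nhds (L α β)))
    (hB : ∀ α β, HasSum (fun x : ℕ => M x α β) (B α β)) :
    ∀ k : ℕ, 1 ≤ k → ∀ α β : S,
      Filter.Tendsto (fun x : ℕ => (x : ℝ) ^ ((3 : ℝ) / 2) * (kpow M k) x α β)
        Filter.atTop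
        (nhds (∑ i ∈ Finset.range k, (B ^ i * L * B ^ (k - 1 - i)) α β)) := by
  suffices H : ∀ k : ℕ, (∀ x α β, 0 ≤ kpow M k x α β) ∧
      (∀ α β, HasSum (fun x => kpow M k x α β) ((B ^ k) α β)) ∧
      (1 ≤ k → ∀ α β : S,
        Tendsto (fun x : ℕ => (x : ℝ) ^ ((3 : ℝ) / 2) * (kpow M k) x α β) atTop
          (nhds (∑ i ∈ Finset.range k, (B ^ i * L * B ^ (k - 1 - i)) α β))) by
    exact fun k hk => (H k).2.2 hk
  intro k
  induction k with
  | zero =>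
    refine ⟨?_, ?_, by omega⟩
    · intro x α β
      by_cases h : x = 0 <;> simp [kpow, h, Matrix.one_apply] <;> positivity
    · intro α β
      have : (fun x : ℕ => kpow M 0 x α β) = fun x => if x = 0 then (1 : Matrix S S ℝ) α β else 0 := by
        funext x
        simp [kpow, apply_ite (fun m : Matrix S S ℝ => m α β)]
      rw [this, pow_zero]
      exact hasSum_ite_eq 0 _
  | succ k ih =>
    obtain ⟨ihpos, ihsum, ihtail⟩ := ih
    have hks : ∀ α β, Summable (fun x => kpow M k x α β) := fun α β => (ihsum α β).summable
    have hnorm : ∀ (f : ℕ → ℝ), (∀ x, 0 ≤ f x) → Summable f → Summable (fun x => ‖f x‖) := by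
      intro f hf hsf
      refine hsf.congr fun x => ?_
      rw [Real.norm_of_nonneg (hf x)]
    have hpos : ∀ x α β, 0 ≤ kpow M (k + 1) x α β := by
      intro x α β
      show 0 ≤ kconv M (kpow M k) x α β
      rw [kconv_apply]
      refine Finset.sum_nonneg fun γ _ => Finset.sum_nonneg fun y _ =>
        mul_nonneg (hM _ _ _) (ihpos _ _ _)
    have hsum : ∀ α β, HasSum (fun x => kpow M (k + 1) x α β) ((B ^ (k + 1)) α β) := by
      intro α β
      have hent : ∀ γ, HasSum
          (fun x => ∑ y ∈ Finset.range (x + 1), M y α γ * kpow M k (x - y) γ β)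
          (B α γ * (B ^ k) γ β) := by
        intro γ
        have h := hasSum_sum_range_mul_of_summable_norm'
          (f := fun y => M y α γ) (g := fun y => kpow M k y γ β)
          (hnorm _ (fun x => hM x α γ) (hB α γ).summable) (hB α γ).summable
          (hnorm _ (fun x => ihpos x γ β) (hks γ β)) (hks γ β)
        rwa [(hB α γ).tsum_eq, (ihsum γ β).tsum_eq] at h
      have h := hasSum_sum (fun γ (_ : γ ∈ Finset.univ) => hent γ)
      have heq : (∑ γ, B α γ * (B ^ k) γ β) = (B ^ (k + 1)) α β := by
        rw [pow_succ', Matrix.mul_apply]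
      rw [heq] at h
      refine h.congr_fun fun x => ?_
      exact kconv_apply M (kpow M k) x α β
    refine ⟨hpos, hsum, fun _ α β => ?_⟩
    by_cases hk : k = 0
    · subst hk
      simp only [show (0:ℕ) + 1 = 1 from rfl, kpow_one]
      have hval : ∑ i ∈ Finset.range 1, (B ^ i * L * B ^ (1 - 1 - i)) α β = L α β := by
        simp
      rw [hval]
      exact htail α β
    · have hk1 : 1 ≤ k := by omega
      have hconv : ∀ γ, Tendsto (fun x : ℕ => (x : ℝ) ^ ((3 : ℝ) / 2) *
          ∑ y ∈ Finset.range (x + 1), M y α γ * kpow M k (x - y) γ β) atTop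
          (nhds (B α γ * (∑ i ∈ Finset.range k, (B ^ i * L * B ^ (k - 1 - i)) γ β)
            + L α γ * (B ^ k) γ β)) := fun γ =>
        conv_tail (f := fun y => M y α γ) (g := fun y => kpow M k y γ β)
          (fun x => hM x α γ) (fun x => ihpos x γ β)
          (htail α γ) (ihtail hk1 γ β) (hB α γ) (ihsum γ β)
      have hsumt := tendsto_finset_sum Finset.univ (fun γ (_ : γ ∈ Finset.univ) => hconv γ)
      have heq2 : (∑ γ, (B α γ * (∑ i ∈ Finset.range k, (B ^ i * L * B ^ (k - 1 - i)) γ β)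
            + L α γ * (B ^ k) γ β))
          = ∑ i ∈ Finset.range (k + 1), (B ^ i * L * B ^ (k + 1 - 1 - i)) α β := by
        have hmat : (∑ i ∈ Finset.range (k + 1), B ^ i * L * B ^ (k - i))
            = B * (∑ i ∈ Finset.range k, B ^ i * L * B ^ (k - 1 - i)) + L * B ^ k := by
          rw [Finset.sum_range_succ', Finset.mul_sum]
          congr 1
          · refine Finset.sum_congr rfl fun i _ => ?_
            rw [show k - (i + 1) = k - 1 - i by omega, pow_succ']
            noncomm_ring
          · simp
        have h4 : ∀ i, k + 1 - 1 - i = k - i := fun i => by omega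
        simp only [h4]
        rw [← Matrix.sum_apply α β (Finset.range (k + 1)) _, hmat, Matrix.add_apply,
          Matrix.mul_apply, Matrix.mul_apply, ← Finset.sum_add_distrib]
        refine Finset.sum_congr rfl fun γ _ => ?_
        rw [Matrix.sum_apply]
      rw [heq2] at hsumt
      refine hsumt.congr fun x => ?_
      rw [show kpow M (k+1) = kconv M (kpow M k) from rfl, kconv_apply, Finset.mul_sum]
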